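/- For every n ≥ 3, the cycle graph C_n on n vertices has tree-length exactly ⌈n/3⌉. -/

import Mathlib

open SimpleGraph

/-- A tree decomposition of a graph `G`, with decomposition tree indexed by `ι`. -/
structure TreeDecomp {V : Type} (G : SimpleGraph V) (ι : Type) : Type where
  /-- the decomposition tree -/
  tree : SimpleGraph ι
  /-- the decomposition tree is a tree -/
  isTree : tree.IsTree
  /-- the bags -/
  bag : ι → Set V
  /-- every vertex of `G` belongs to some bag -/
  bag_cover : ∀ v : V, ∃ t, v ∈ bag t
  /-- both endpoints of every edge of `G` lie in a common bag -/
  bag_edge : ∀ ⦃u v : V⦄, G.Adj u v → ∃ t, u ∈ bag t ∧ v ∈ bag t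
  /-- the nodes whose bag contains a given vertex induce a connected subtree -/
  bag_conn : ∀ v : V, (tree.induce {t | v ∈ bag t}).Connected

/-- `G` has a tree decomposition all of whose bags have diameter at most `ℓ` in `G`. -/
def HasTDLength {V : Type} (G : SimpleGraph V) (ℓ : ℕ) : Prop :=
  ∃ (ι : Type) (td : TreeDecomp G ι), ∀ t, ∀ u ∈ td.bag t, ∀ v ∈ td.bag t, G.dist u v ≤ ℓ

/-- The tree-length of `G`: the minimum length over all tree decompositions of `G`. -/
noncomputable def treeLength {V : Type} (G : SimpleGraph V) : ℕ :=
  sInf {ℓ | HasTDLength G ℓ}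

namespace CycleTL

variable {V : Type} {G : SimpleGraph V}

/-- split a walk at the last vertex belonging to `S`. -/
lemma exists_last_split {a b : V} (p : G.Walk a b) (S : Set V)
    (h : ∃ x ∈ p.support, x ∈ S) :
    ∃ (m : V) (_ : m ∈ S) (p1 : G.Walk a m) (p2 : G.Walk m b),
      p = p1.append p2 ∧ ∀ x ∈ p2.support, x ∈ S → x = m := by
  induction p with
  | @nil u =>
      refine ⟨u, by simpa using h, .nil, .nil, rfl, ?_⟩
      intro x hx _
      simpa using hx
  | @cons u c b h' q ih =>
      by_cases hq : ∃ x ∈ q.support, x ∈ S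
      · obtain ⟨m, hm, p1, p2, hpe, hlast⟩ := ih hq
        exact ⟨m, hm, .cons h' p1, p2, by rw [Walk.cons_append, hpe], hlast⟩
      · push_neg at hq
        have ha : u ∈ S := by
          obtain ⟨x, hx, hxS⟩ := h
          rcases List.mem_cons.mp (Walk.support_cons h' q ▸ hx) with h1 | h1
          · exact h1 ▸ hxS
          · exact absurd hxS (hq x h1)
        refine ⟨u, ha, .nil, .cons h' q, rfl, ?_⟩
        intro x hx hxS
        rcases List.mem_cons.mp (Walk.support_cons h' q ▸ hx) with h1 | h1
        · exact h1
        · exact absurd hxS (hq x h1)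

lemma isPath_append {a b c : V} {p : G.Walk a b} {q : G.Walk b c}
    (hp : p.IsPath) (hq : q.IsPath)
    (hint : ∀ x ∈ p.support, x ∈ q.support → x = b) : (p.append q).IsPath := by
  rw [Walk.isPath_def, Walk.support_append, List.nodup_append]
  have hqc := q.support_eq_cons
  have hqn := hq.support_nodup
  rw [hqc, List.nodup_cons] at hqn
  refine ⟨hp.support_nodup, hqn.2, ?_⟩
  intro x hxp y hxq hxy
  subst hxy
  have hxq' : x ∈ q.support := by rw [hqc]; exact List.mem_cons_of_mem _ hxq
  have := hint x hxp hxq'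
  subst this
  exact hqn.1 hxq


lemma mem_support_all_walks {T : SimpleGraph V} (hT : T.IsTree) {a b m : V}
    {p : T.Walk a b} (hp : p.IsPath) (hm : m ∈ p.support) :
    ∀ w : T.Walk a b, m ∈ w.support := by
  classical
  intro w
  have hu := (hT.existsUnique_path a b).unique hp w.bypass_isPath
  exact w.support_bypass_subset (hu ▸ hm)

lemma exists_median {T : SimpleGraph V} (hT : T.IsTree) (t1 t2 t3 : V) :
    ∃ m : V, (∀ w : T.Walk t1 t2, m ∈ w.support) ∧
             (∀ w : T.Walk t1 t3, m ∈ w.support) ∧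
             (∀ w : T.Walk t2 t3, m ∈ w.support) := by
  classical
  have hconn := hT.isConnected
  obtain ⟨P0⟩ := hconn t1 t2
  obtain ⟨Q0⟩ := hconn t1 t3
  set P := P0.bypass with hPdef
  set Q := Q0.bypass with hQdef
  have hP : P.IsPath := P0.bypass_isPath
  have hQ : Q.IsPath := Q0.bypass_isPath
  obtain ⟨m, hmQ, p1, p2, hsplit, hlast⟩ :=
    exists_last_split P {x | x ∈ Q.support} ⟨t1, P.start_mem_support, Q.start_mem_support⟩
  have hmQ' : m ∈ Q.support := hmQ
  have hp2 : p2.IsPath := by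
    have := hsplit ▸ hP
    exact this.of_append_right
  have hdrop : (Q.dropUntil m hmQ').IsPath := hQ.dropUntil hmQ'
  have hR : (p2.reverse.append (Q.dropUntil m hmQ')).IsPath := by
    apply isPath_append hp2.reverse hdrop
    intro x hx hx'
    apply hlast
    · rw [Walk.support_reverse] at hx
      exact List.mem_reverse.mp hx
    · exact Q.support_dropUntil_subset hmQ' hx'
  refine ⟨m, ?_, ?_, ?_⟩
  · apply mem_support_all_walks hT hP
    rw [hsplit]
    exact Walk.subset_support_append_left _ _ p1.end_mem_support
  · exact mem_support_all_walks hT hQ hmQ'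
  · apply mem_support_all_walks hT hR
    exact Walk.subset_support_append_left _ _ (by
      rw [Walk.support_reverse]; exact List.mem_reverse.mpr p2.start_mem_support)


variable {n : ℕ} [NeZero n]

open Fin.NatCast
open Fin.CommRing

lemma adj_next (hn : 3 ≤ n) (a : Fin n) : (cycleGraph n).Adj a (a + 1) := by
  rw [cycleGraph_adj']
  right
  rw [add_sub_cancel_left, Fin.val_one']
  exact Nat.mod_eq_of_lt (by omega)

lemma val_add_cast (a : Fin n) (j : ℕ) (h : a.val + j < n) :
    (a + (j : Fin n)).val = a.val + j := by
  rw [Fin.add_def, Fin.val_natCast]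
  have hj : j % n = j := Nat.mod_eq_of_lt (by omega)
  rw [hj]
  exact Nat.mod_eq_of_lt h

lemma add_cast_n_sub (a : Fin n) : a + ((n - a.val : ℕ) : Fin n) = 0 := by
  apply Fin.ext
  rw [Fin.add_def]
  show (a.val + ((n - a.val : ℕ) : Fin n).val) % n = (0 : Fin n).val
  rw [Fin.val_natCast, Fin.val_zero]
  have ha := a.isLt
  rcases Nat.eq_zero_or_pos a.val with h0 | hpos
  · rw [h0]
    simp [Nat.mod_self]
  · have h1 : (n - a.val) % n = n - a.val := Nat.mod_eq_of_lt (by omega)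
    rw [h1]
    have h2 : a.val + (n - a.val) = n := by omega
    rw [h2, Nat.mod_self]

lemma walk_to (hn : 3 ≤ n) (d : ℕ) : ∀ (a b : Fin n), b = a + (d : Fin n) →
    ∃ w : (cycleGraph n).Walk a b, w.length = d ∧
      ∀ x ∈ w.support, ∃ j ≤ d, x = a + (j : Fin n) := by
  induction d with
  | zero =>
      intro a b hb
      rw [Nat.cast_zero, add_zero] at hb
      subst hb
      exact ⟨.nil, rfl, fun x hx => ⟨0, le_refl 0, by simpa using hx⟩⟩
  | succ d ih =>
      intro a b hb
      have hb' : b = (a + 1) + (d : Fin n) := by rw [hb]; push_cast; ring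
      obtain ⟨w, hlen, hsup⟩ := ih (a + 1) b hb'
      refine ⟨.cons (adj_next hn a) w, by simp [hlen], ?_⟩
      intro x hx
      rw [Walk.support_cons] at hx
      rcases List.mem_cons.mp hx with h1 | h1
      · exact ⟨0, by omega, by simp [h1]⟩
      · obtain ⟨j, hj, hxe⟩ := hsup x h1
        exact ⟨j + 1, by omega, by rw [hxe]; push_cast; ring⟩

lemma dist_le_of (hn : 3 ≤ n) (a b : Fin n) (d : ℕ) (hb : b = a + (d : Fin n)) :
    (cycleGraph n).dist a b ≤ d := by
  obtain ⟨w, hlen, _⟩ := walk_to hn d a b hb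
  exact le_trans (dist_le w) hlen.le

lemma reachable_cyc (hn : 3 ≤ n) (a b : Fin n) : (cycleGraph n).Reachable a b := by
  rcases le_total a.val b.val with h | h
  · obtain ⟨w, _, _⟩ := walk_to hn (b.val - a.val) a b
      (by apply Fin.ext; rw [val_add_cast a _ (by omega)]; omega)
    exact ⟨w⟩
  · obtain ⟨w, _, _⟩ := walk_to hn (a.val - b.val) b a
      (by apply Fin.ext; rw [val_add_cast b _ (by omega)]; omega)
    exact (Walk.reachable w).symm

lemma dist_forward (hn : 3 ≤ n) (a b : Fin n) (h : a.val ≤ b.val) :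
    (cycleGraph n).dist a b ≤ b.val - a.val := by
  apply dist_le_of hn
  apply Fin.ext
  rw [val_add_cast a _ (by omega)]
  omega

lemma dist_wrap (hn : 3 ≤ n) (a b : Fin n) (h : a.val ≤ b.val) :
    (cycleGraph n).dist a b ≤ n - b.val + a.val := by
  rw [dist_comm]
  apply dist_le_of hn
  have : ((n - b.val + a.val : ℕ) : Fin n) = ((n - b.val : ℕ) : Fin n) + ((a.val : ℕ) : Fin n) := by
    push_cast; ring
  rw [this, ← add_assoc, add_cast_n_sub, zero_add, Fin.cast_val_eq_self]

lemma sub_val_one {x y : Fin n} (h : (x - y).val = 1) :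
    ∃ t : ℤ, (x.val : ℤ) = y.val + 1 + n * t := by
  rw [Fin.sub_def] at h
  simp only at h
  set X := n - y.val + x.val with hX
  have hdm := Nat.div_add_mod X n
  rw [h] at hdm
  refine ⟨(X / n : ℕ) - 1, ?_⟩
  have hy := y.isLt
  have hx := x.isLt
  have hXz : (X : ℤ) = (n : ℤ) - y.val + x.val := by omega
  have hdmz : (n : ℤ) * ((X / n : ℕ) : ℤ) + 1 = (X : ℤ) := by exact_mod_cast hdm
  push_cast
  rw [mul_sub, mul_one]
  linarith

lemma adj_val_rel (hn : 3 ≤ n) {a c : Fin n} (h : (cycleGraph n).Adj a c) :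
    ∃ e t : ℤ, (e = 1 ∨ e = -1) ∧ (c.val : ℤ) = a.val + e + n * t := by
  rcases cycleGraph_adj'.mp h with h1 | h1
  · obtain ⟨t, ht⟩ := sub_val_one h1
    exact ⟨-1, -t, Or.inr rfl, by linear_combination -ht⟩
  · obtain ⟨t, ht⟩ := sub_val_one h1
    exact ⟨1, t, Or.inl rfl, ht⟩

lemma winding (hn : 3 ≤ n) : ∀ {a b : Fin n} (w : (cycleGraph n).Walk a b),
    ∃ s t : ℤ, (b.val : ℤ) = a.val + s + n * t ∧ s.natAbs ≤ w.length := by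
  intro a b w
  induction w with
  | nil => exact ⟨0, 0, by simp, by simp⟩
  | @cons a c b h q ih =>
      obtain ⟨s, t, heq, hle⟩ := ih
      obtain ⟨e, t', he, heq'⟩ := adj_val_rel hn h
      refine ⟨s + e, t + t', by rw [heq, heq']; ring, ?_⟩
      rw [Walk.length_cons]
      rcases he with rfl | rfl <;> omega

lemma dist_ge (hn : 3 ≤ n) {k : ℕ} (a b : Fin n) (hab : a.val ≤ b.val)
    (h1 : k ≤ b.val - a.val) (h2 : b.val - a.val ≤ n - k) :
    k ≤ (cycleGraph n).dist a b := by
  rcases Nat.eq_zero_or_pos k with rfl | hk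
  · exact Nat.zero_le _
  by_contra hlt
  push_neg at hlt
  obtain ⟨w, hw⟩ := (reachable_cyc hn a b).exists_walk_length_eq_dist
  obtain ⟨s, t, heq, hle⟩ := winding hn w
  rw [hw] at hle
  have hb := b.isLt
  have ha2 := a.isLt
  have hX : (n : ℤ) * t = (b.val : ℤ) - a.val - s := by rw [heq]; ring
  have hs1 : s ≤ (k : ℤ) - 1 ∧ -((k : ℤ) - 1) ≤ s := by omega
  have hba : (k : ℤ) ≤ (b.val : ℤ) - a.val ∧ (b.val : ℤ) - a.val ≤ (n : ℤ) - k := by omega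
  have hbound : 1 ≤ (n : ℤ) * t ∧ (n : ℤ) * t ≤ (n : ℤ) - 1 := by
    constructor <;> linarith [hX, hs1.1, hs1.2, hba.1, hba.2]
  rcases le_or_gt t 0 with ht | ht
  · have hnp : (n : ℤ) * t ≤ 0 := mul_nonpos_iff.mpr (Or.inl ⟨by positivity, ht⟩)
    linarith [hbound.1]
  · have h1t : (1 : ℤ) ≤ t := ht
    have : (n : ℤ) ≤ n * t := le_mul_of_one_le_right (by positivity) h1t
    linarith [hbound.2]


def star4 : SimpleGraph (Fin 4) where
  Adj a b := a ≠ b ∧ (a = 0 ∨ b = 0)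
  symm := ⟨by
    intro a b ⟨h1, h2⟩
    exact ⟨h1.symm, h2.symm⟩⟩
  loopless := ⟨fun a h => h.1 rfl⟩

lemma star4_adj {a b : Fin 4} (h1 : a ≠ b) (h2 : a = 0 ∨ b = 0) : star4.Adj a b := ⟨h1, h2⟩

lemma star4_no_zero {a b : Fin 4} (p : star4.Walk a b)
    (h : (0 : Fin 4) ∉ p.support) : a = b := by
  cases p with
  | nil => rfl
  | @cons a c b h' q =>
      exfalso
      rcases h'.2 with h0 | h0
      · exact h (h0 ▸ (Walk.cons h' q).start_mem_support)
      · refine h ?_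
        rw [Walk.support_cons]
        exact List.mem_cons_of_mem _ (h0 ▸ q.start_mem_support)

lemma star4_from_zero {w : Fin 4} (hw : w ≠ 0) (q : star4.Walk 0 w) (hq : q.IsPath) :
    q = Walk.cons (star4_adj (Ne.symm hw) (Or.inl rfl)) Walk.nil := by
  cases q with
  | nil => exact absurd rfl hw
  | @cons a c b h' q' =>
      rw [Walk.cons_isPath_iff] at hq
      have hc : c = w := star4_no_zero q' hq.2
      subst hc
      have hnil : q' = Walk.nil := (Walk.isPath_iff_eq_nil (p := q')).mp hq.1
      rw [hnil]

lemma star4_isTree : star4.IsTree := by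
  rw [isTree_iff_existsUnique_path]
  refine ⟨⟨0⟩, fun v w => ?_⟩
  by_cases hvw : v = w
  · subst hvw
    exact ⟨Walk.nil, Walk.IsPath.nil, fun q hq => (Walk.isPath_iff_eq_nil (p := q)).mp hq⟩
  · by_cases hv : v = 0
    · subst hv
      refine ⟨Walk.cons (star4_adj (Ne.symm (Ne.symm hvw)) (Or.inl rfl)) Walk.nil,
        ?_, fun q hq => star4_from_zero (Ne.symm hvw) q hq⟩
      · simp only [Walk.cons_isPath_iff, Walk.isPath_iff_eq_nil, Walk.support_nil,
          List.mem_singleton]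
        exact ⟨trivial, hvw⟩
    · -- v ≠ 0
      by_cases hw : w = 0
      · subst hw
        refine ⟨Walk.cons (star4_adj hvw (Or.inr rfl)) Walk.nil, ?_, ?_⟩
        · simp only [Walk.cons_isPath_iff, Walk.isPath_iff_eq_nil, Walk.support_nil,
            List.mem_singleton]
          exact ⟨trivial, hv⟩
        · intro q hq
          cases q with
          | nil => exact absurd rfl hvw
          | @cons a c b h' q' =>
              rcases h'.2 with h0 | h0
              · exact absurd h0 hv
              · subst h0
                rw [Walk.cons_isPath_iff] at hq
                have hnil : q' = Walk.nil := (Walk.isPath_iff_eq_nil (p := q')).mp hq.1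
                rw [hnil]
      · -- v ≠ 0, w ≠ 0, v ≠ w
        refine ⟨Walk.cons (star4_adj hv (Or.inr rfl))
          (Walk.cons (star4_adj (Ne.symm hw) (Or.inl rfl)) Walk.nil), ?_, ?_⟩
        · simp only [Walk.cons_isPath_iff]
          refine ⟨⟨Walk.IsPath.nil, by simpa using Ne.symm hw⟩, ?_⟩
          rw [Walk.support_cons, Walk.support_nil]
          simp only [List.mem_cons, List.mem_singleton]
          rintro (rfl | rfl | h)
          · exact hv rfl
          · exact hvw rfl
          · simp at h
        · intro q hq
          cases q with
          | nil => exact absurd rfl hvw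
          | @cons a c b h' q' =>
              rcases h'.2 with h0 | h0
              · exact absurd h0 hv
              · subst h0
                rw [Walk.cons_isPath_iff] at hq
                rw [star4_from_zero hw q' hq.1]

lemma star4_induce_conn_of_zero {S : Set (Fin 4)} (h0 : (0 : Fin 4) ∈ S) :
    (star4.induce S).Connected := by
  have key : ∀ (x : Fin 4) (hx : x ∈ S),
      (star4.induce S).Reachable ⟨x, hx⟩ ⟨0, h0⟩ := by
    intro x hx
    by_cases hx0 : x = 0
    · subst hx0
      rfl
    · exact (Adj.reachable (by exact ⟨by simpa using hx0, Or.inr rfl⟩))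
  rw [connected_iff_exists_forall_reachable]
  refine ⟨⟨0, h0⟩, ?_⟩
  intro w
  obtain ⟨b, hb⟩ := w
  exact (key b hb).symm

lemma induce_conn_single {V : Type} {G : SimpleGraph V} {S : Set V} {a : V} (ha : a ∈ S)
    (hs : ∀ x ∈ S, x = a) : (G.induce S).Connected := by
  rw [connected_iff_exists_forall_reachable]
  refine ⟨⟨a, ha⟩, ?_⟩
  intro w
  obtain ⟨y, hy⟩ := w
  have h2 := hs y hy
  subst h2
  rfl


variable {ι : Type}

/-- walk inside the subtree of nodes whose bag contains `x`, avoiding `m` -/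
lemma walk_in_bagset (td : TreeDecomp G ι) {m : ι} (x : V) (hxm : x ∉ td.bag m)
    {s t : ι} (hs : x ∈ td.bag s) (ht : x ∈ td.bag t) :
    ∃ w : td.tree.Walk s t, ∀ y ∈ w.support, y ≠ m := by
  have hconn := td.bag_conn x
  obtain ⟨w0⟩ := hconn.preconnected ⟨s, hs⟩ ⟨t, ht⟩
  refine ⟨w0.map (SimpleGraph.Embedding.induce _).toHom, ?_⟩
  intro y hy
  erw [Walk.support_map] at hy
  obtain ⟨z, hz, rfl⟩ := List.mem_map.mp hy
  intro h
  exact hxm (h ▸ z.property)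

lemma tree_walk_avoiding (td : TreeDecomp G ι) {m : ι} :
    ∀ {u v : V} (w : G.Walk u v), (∀ x ∈ w.support, x ∉ td.bag m) →
    ∀ {s t : ι}, u ∈ td.bag s → v ∈ td.bag t →
      ∃ w' : td.tree.Walk s t, ∀ y ∈ w'.support, y ≠ m := by
  intro u v w
  induction w with
  | @nil a =>
      intro hav s t hs ht
      exact walk_in_bagset td a (hav a (by simp)) hs ht
  | @cons a c b h' q ih =>
      intro hav s t hs ht
      obtain ⟨s', hs1, hs2⟩ := td.bag_edge h'
      have ha : a ∉ td.bag m := hav a (by simp)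
      obtain ⟨w1, hw1⟩ := walk_in_bagset td a ha hs hs1
      obtain ⟨w2, hw2⟩ := ih (fun x hx => hav x (by simp [hx])) hs2 ht
      refine ⟨w1.append w2, ?_⟩
      intro y hy
      rcases (Walk.mem_support_append_iff _ _).mp hy with h1 | h1
      · exact hw1 y h1
      · exact hw2 y h1

/-- separation: if every tree walk from `s` to `t` passes through `m`, then every
walk in `G` between a vertex of bag `s` and a vertex of bag `t` meets bag `m`. -/
lemma hits_bag (td : TreeDecomp G ι) {m s t : ι} {u v : V}
    (hu : u ∈ td.bag s) (hv : v ∈ td.bag t)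
    (hsep : ∀ w : td.tree.Walk s t, m ∈ w.support)
    (w : G.Walk u v) : ∃ x ∈ w.support, x ∈ td.bag m := by
  by_contra hc
  push_neg at hc
  obtain ⟨w', hw'⟩ := tree_walk_avoiding td w hc hu hv
  exact hw' m (hsep w') rfl


lemma dist_le_k (hn : 3 ≤ n) {k : ℕ} {u v : Fin n} (hle : u.val ≤ v.val)
    (h : v.val - u.val ≤ k ∨ n - v.val + u.val ≤ k) : (cycleGraph n).dist u v ≤ k := by
  rcases h with h | h
  · exact le_trans (dist_forward hn u v hle) h
  · exact le_trans (dist_wrap hn u v hle) h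

/-- the adjacency relation of the cycle graph, on values -/
lemma adj_val (hn : 3 ≤ n) {u v : Fin n} (h : (cycleGraph n).Adj u v) :
    (v.val = u.val + 1) ∨ (u.val = v.val + 1) ∨ (u.val = n - 1 ∧ v.val = 0) ∨
      (v.val = n - 1 ∧ u.val = 0) := by
  obtain ⟨e, t, he, heq⟩ := adj_val_rel hn h
  have hu := u.isLt
  have hv := v.isLt
  -- (v : ℤ) = u + e + n*t with |e| = 1 ⇒ t ∈ {-1,0,1}
  have hne : u ≠ v := h.ne
  have hne' : u.val ≠ v.val := fun hh => hne (Fin.ext hh)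
  have ht1 : t = 0 ∨ t = 1 ∨ t = -1 := by
    by_contra hc
    push_neg at hc
    obtain ⟨h0, hp1, hm1⟩ := hc
    rcases lt_trichotomy t 0 with htl | htl | htl
    · have : t ≤ -2 := by omega
      have : (n : ℤ) * t ≤ n * (-2) := by
        apply mul_le_mul_of_nonneg_left this (by positivity)
      rcases he with rfl | rfl <;> nlinarith
    · exact h0 htl
    · have : (2 : ℤ) ≤ t := by omega
      have : (n : ℤ) * 2 ≤ n * t := by
        apply mul_le_mul_of_nonneg_left this (by positivity)
      rcases he with rfl | rfl <;> nlinarith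
  rcases ht1 with rfl | rfl | rfl <;> rcases he with rfl | rfl <;>
    simp only [mul_zero, mul_one, mul_neg] at heq <;> omega

def bags (n k : ℕ) : Fin 4 → Set (Fin n)
  | ⟨0, _⟩ => {x | x.val = 0 ∨ x.val = k ∨ x.val = 2*k}
  | ⟨1, _⟩ => {x | x.val ≤ k}
  | ⟨2, _⟩ => {x | k ≤ x.val ∧ x.val ≤ 2*k}
  | ⟨3, _⟩ => {x | 2*k ≤ x.val ∨ x.val = 0}

lemma hasTDLength_of_diam {V : Type} [Nonempty V] (G : SimpleGraph V) (ℓ : ℕ)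
    (h : ∀ u v : V, G.dist u v ≤ ℓ) : HasTDLength G ℓ := by
  refine ⟨Unit, ⟨⊥, ⟨?_, isAcyclic_bot⟩, fun _ => Set.univ, fun v => ⟨(), trivial⟩,
    fun u v _ => ⟨(), trivial, trivial⟩, fun v => ?_⟩, fun t u _ v _ => h u v⟩
  · rw [connected_iff_exists_forall_reachable]
    exact ⟨(), fun w => by rw [Subsingleton.elim w ()]⟩
  · exact induce_conn_single (a := ()) trivial (fun x _ => Subsingleton.elim x ())

lemma upper (n k : ℕ) (hn : 3 ≤ n) (hk1 : n ≤ 3*k) (hk2 : 3*k ≤ n + 2) (hk : 1 ≤ k) :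
    HasTDLength (cycleGraph n) k := by
  haveI : NeZero n := ⟨by omega⟩
  by_cases h4 : n = 4
  · subst h4
    have hk4 : k = 2 := by omega
    subst hk4
    apply hasTDLength_of_diam
    intro u v
    have hu := u.isLt; have hv := v.isLt
    rcases le_total u.val v.val with hle | hle
    · exact dist_le_k (by omega) hle (by omega)
    · rw [dist_comm]
      exact dist_le_k (by omega) hle (by omega)
  · have h2k : 2*k < n := by omega
    refine ⟨Fin 4, ⟨star4, star4_isTree, bags n k, ?_, ?_, ?_⟩, ?_⟩
    · -- cover
      intro v
      by_cases h1 : v.val ≤ k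
      · exact ⟨1, show v.val ≤ k from h1⟩
      · by_cases h2 : v.val ≤ 2*k
        · exact ⟨2, show k ≤ v.val ∧ v.val ≤ 2*k from by omega⟩
        · exact ⟨3, show 2*k ≤ v.val ∨ v.val = 0 from by omega⟩
    · -- edges
      intro u v hadj
      have hu := u.isLt; have hv := v.isLt
      have key : ∀ a b : Fin n, b.val = a.val + 1 →
          ∃ t, a ∈ bags n k t ∧ b ∈ bags n k t := by
        intro a b hab
        have ha := a.isLt; have hb := b.isLt
        by_cases hc1 : b.val ≤ k
        · exact ⟨1, show a.val ≤ k from by omega, show b.val ≤ k from hc1⟩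
        · by_cases hc2 : b.val ≤ 2*k
          · exact ⟨2, show k ≤ a.val ∧ a.val ≤ 2*k from by omega,
              show k ≤ b.val ∧ b.val ≤ 2*k from by omega⟩
          · exact ⟨3, show 2*k ≤ a.val ∨ a.val = 0 from by omega,
              show 2*k ≤ b.val ∨ b.val = 0 from by omega⟩
      rcases adj_val hn hadj with h1 | h1 | h1 | h1
      · exact key u v h1
      · obtain ⟨t, ht1, ht2⟩ := key v u h1
        exact ⟨t, ht2, ht1⟩
      · exact ⟨3, show 2*k ≤ u.val ∨ u.val = 0 from by omega,
          show 2*k ≤ v.val ∨ v.val = 0 from by omega⟩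
      · obtain ⟨t, ht1, ht2⟩ := (⟨3, show 2*k ≤ v.val ∨ v.val = 0 from by omega,
          show 2*k ≤ u.val ∨ u.val = 0 from by omega⟩ :
            ∃ t, v ∈ bags n k t ∧ u ∈ bags n k t)
        exact ⟨t, ht2, ht1⟩
    · -- connectivity of bag subtrees
      intro v
      have hv := v.isLt
      by_cases h0 : v.val = 0 ∨ v.val = k ∨ v.val = 2*k
      · exact star4_induce_conn_of_zero (show v.val = 0 ∨ v.val = k ∨ v.val = 2*k from h0)
      · push_neg at h0
        obtain ⟨e0, ek, e2k⟩ := h0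
        by_cases h1 : v.val < k
        · refine induce_conn_single (a := 1) (show v.val ≤ k from by omega) ?_
          intro t ht
          fin_cases t
          · exact absurd ht (show ¬(v.val = 0 ∨ v.val = k ∨ v.val = 2*k) from by
              push_neg; exact ⟨e0, ek, e2k⟩)
          · rfl
          · exact absurd ht (show ¬(k ≤ v.val ∧ v.val ≤ 2*k) from by omega)
          · exact absurd ht (show ¬(2*k ≤ v.val ∨ v.val = 0) from by omega)
        · by_cases h2 : v.val < 2*k
          · refine induce_conn_single (a := 2)
              (show k ≤ v.val ∧ v.val ≤ 2*k from by omega) ?_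
            intro t ht
            fin_cases t
            · exact absurd ht (show ¬(v.val = 0 ∨ v.val = k ∨ v.val = 2*k) from by
                push_neg; exact ⟨e0, ek, e2k⟩)
            · exact absurd ht (show ¬(v.val ≤ k) from by omega)
            · rfl
            · exact absurd ht (show ¬(2*k ≤ v.val ∨ v.val = 0) from by omega)
          · refine induce_conn_single (a := 3)
              (show 2*k ≤ v.val ∨ v.val = 0 from by omega) ?_
            intro t ht
            fin_cases t
            · exact absurd ht (show ¬(v.val = 0 ∨ v.val = k ∨ v.val = 2*k) from by
                push_neg; exact ⟨e0, ek, e2k⟩)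
            · exact absurd ht (show ¬(v.val ≤ k) from by omega)
            · exact absurd ht (show ¬(k ≤ v.val ∧ v.val ≤ 2*k) from by omega)
            · rfl
    · -- diameters
      intro t u hu v hv
      have huv := u.isLt; have hvv := v.isLt
      have main : ∀ a b : Fin n, a.val ≤ b.val → a ∈ bags n k t → b ∈ bags n k t →
          (cycleGraph n).dist a b ≤ k := by
        intro a b hle ha hb
        have hav := a.isLt; have hbv := b.isLt
        fin_cases t
        · exact dist_le_k hn hle (by
            rcases (ha : a.val = 0 ∨ a.val = k ∨ a.val = 2*k) with h|h|h <;>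
            rcases (hb : b.val = 0 ∨ b.val = k ∨ b.val = 2*k) with h'|h'|h' <;> omega)
        · exact dist_le_k hn hle (by
            have ha' : a.val ≤ k := ha
            have hb' : b.val ≤ k := hb
            omega)
        · exact dist_le_k hn hle (by
            have ha' : k ≤ a.val ∧ a.val ≤ 2*k := ha
            have hb' : k ≤ b.val ∧ b.val ≤ 2*k := hb
            omega)
        · exact dist_le_k hn hle (by
            have ha' : 2*k ≤ a.val ∨ a.val = 0 := ha
            have hb' : 2*k ≤ b.val ∨ b.val = 0 := hb
            omega)
      rcases le_total u.val v.val with hle | hle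
      · exact main u v hle hu hv
      · rw [dist_comm]
        exact main v u hle hv hu


lemma adj_of_succ (hn : 3 ≤ n) {a b : Fin n} (h : b.val = a.val + 1) :
    (cycleGraph n).Adj a b := by
  have hb := b.isLt
  have : b = a + ((1 : ℕ) : Fin n) := by
    apply Fin.ext
    rw [val_add_cast a 1 (by omega)]
    exact h
  rw [Nat.cast_one] at this
  exact this ▸ adj_next hn a

lemma lower (k ℓ : ℕ) (hn : 3 ≤ n) (hk1 : n ≤ 3*k) (hk2 : 3*k ≤ n + 2) (hk : 1 ≤ k)
    (h : HasTDLength (cycleGraph n) ℓ) : k ≤ ℓ := by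
  obtain ⟨ι, td, hd⟩ := h
  by_cases hk1' : k = 1
  · subst hk1'
    have hadj : (cycleGraph n).Adj ⟨0, by omega⟩ ⟨1, by omega⟩ := adj_of_succ hn rfl
    obtain ⟨t, ht0, ht1⟩ := td.bag_edge hadj
    calc 1 ≤ (cycleGraph n).dist ⟨0, by omega⟩ ⟨1, by omega⟩ :=
            dist_ge hn _ _ (by simp) (by simp) (by simp; omega)
      _ ≤ ℓ := hd t _ ht0 _ ht1
  · have hkk : 2 ≤ k := by omega
    have h2k : 2*k - 1 < n := by omega
    obtain ⟨z0, hz0⟩ : ∃ z : Fin n, z.val = 0 := ⟨⟨0, by omega⟩, rfl⟩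
    obtain ⟨z1, hz1⟩ : ∃ z : Fin n, z.val = 1 := ⟨⟨1, by omega⟩, rfl⟩
    obtain ⟨a2, ha2⟩ : ∃ z : Fin n, z.val = k - 1 := ⟨⟨k-1, by omega⟩, rfl⟩
    obtain ⟨b2, hb2⟩ : ∃ z : Fin n, z.val = k := ⟨⟨k, by omega⟩, rfl⟩
    obtain ⟨a3, ha3⟩ : ∃ z : Fin n, z.val = 2*k - 2 := ⟨⟨2*k-2, by omega⟩, rfl⟩
    obtain ⟨b3, hb3⟩ : ∃ z : Fin n, z.val = 2*k - 1 := ⟨⟨2*k-1, by omega⟩, rfl⟩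
    obtain ⟨t1, ht1a, ht1b⟩ := td.bag_edge (adj_of_succ hn (show z1.val = z0.val + 1 by omega))
    obtain ⟨t2, ht2a, ht2b⟩ := td.bag_edge (adj_of_succ hn (show b2.val = a2.val + 1 by omega))
    obtain ⟨t3, ht3a, ht3b⟩ := td.bag_edge (adj_of_succ hn (show b3.val = a3.val + 1 by omega))
    obtain ⟨m, hm12, hm13, hm23⟩ := exists_median td.isTree t1 t2 t3
    -- x1 : on the arc [1, k-1]
    obtain ⟨w12, _, hsup12⟩ := walk_to hn (k-2) z1 a2 (by
      apply Fin.ext; rw [val_add_cast z1 (k-2) (by omega)]; omega)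
    obtain ⟨x1, hx1sup, hx1bag⟩ := hits_bag td ht1b ht2a hm12 w12
    have hx1 : 1 ≤ x1.val ∧ x1.val ≤ k - 1 := by
      obtain ⟨j, hj, rfl⟩ := hsup12 x1 hx1sup
      rw [val_add_cast z1 j (by omega)]
      omega
    -- x2 : on the arc [k, 2k-2]
    obtain ⟨w23, _, hsup23⟩ := walk_to hn (k-2) b2 a3 (by
      apply Fin.ext; rw [val_add_cast b2 (k-2) (by omega)]; omega)
    obtain ⟨x2, hx2sup, hx2bag⟩ := hits_bag td ht2b ht3a hm23 w23
    have hx2 : k ≤ x2.val ∧ x2.val ≤ 2*k - 2 := by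
      obtain ⟨j, hj, rfl⟩ := hsup23 x2 hx2sup
      rw [val_add_cast b2 j (by omega)]
      omega
    -- x3 : on the arc [2k-1, n-1] ∪ {0}
    obtain ⟨w31, _, hsup31⟩ := walk_to hn (n - (2*k-1)) b3 z0 (by
      have h0 : z0 = (0 : Fin n) := by
        apply Fin.ext; rw [hz0]; simp
      rw [h0, ← hb3]
      exact (add_cast_n_sub b3).symm)
    obtain ⟨x3, hx3sup, hx3bag⟩ := hits_bag td ht3b ht1a
      (fun w => by
        have := hm13 w.reverse
        rw [Walk.support_reverse] at this
        exact List.mem_reverse.mp this) w31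
    have hx3 : x3.val = 0 ∨ 2*k - 1 ≤ x3.val := by
      obtain ⟨j, hj, rfl⟩ := hsup31 x3 hx3sup
      by_cases hjn : b3.val + j < n
      · rw [val_add_cast b3 j hjn]
        right; omega
      · have hj' : j = n - b3.val := by omega
        subst hj'
        rw [add_cast_n_sub b3]
        left; simp
    -- find a good pair
    have hgoal : ∃ a b : Fin n, a ∈ td.bag m ∧ b ∈ td.bag m ∧ a.val ≤ b.val ∧
        k ≤ b.val - a.val ∧ b.val - a.val ≤ n - k := by
      have hx3lt := x3.isLt
      rcases hx3 with h3 | h3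
      · exact ⟨x3, x2, hx3bag, hx2bag, by omega, by omega, by omega⟩
      · by_cases hc : x3.val - x1.val ≤ n - k
        · exact ⟨x1, x3, hx1bag, hx3bag, by omega, by omega, hc⟩
        · by_cases hcc : k ≤ x2.val - x1.val
          · exact ⟨x1, x2, hx1bag, hx2bag, by omega, hcc, by omega⟩
          · exact ⟨x2, x3, hx2bag, hx3bag, by omega, by omega, by omega⟩
    obtain ⟨a, b, hab1, hab2, hab3, hab4, hab5⟩ := hgoal
    calc k ≤ (cycleGraph n).dist a b := dist_ge hn a b hab3 hab4 hab5
      _ ≤ ℓ := hd m a hab1 b hab2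

end CycleTL

/-- For every `n ≥ 3`, the cycle graph `C_n` on `n` vertices has
tree-length exactly `⌈n / 3⌉`. -/
theorem treeLength_cycleGraph (n : ℕ) (hn : 3 ≤ n) :
    treeLength (SimpleGraph.cycleGraph n) = ⌈(n : ℚ) / 3⌉₊ := by
  haveI : NeZero n := ⟨by omega⟩
  set k := ⌈(n : ℚ) / 3⌉₊ with hk
  have hk1 : n ≤ 3 * k := by
    have h := Nat.le_ceil ((n : ℚ) / 3)
    rw [div_le_iff₀ (by norm_num : (0:ℚ) < 3)] at h
    have h' : (n : ℚ) ≤ 3 * k := by rw [← hk] at h; linarith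
    exact_mod_cast h'
  have hk2 : 3 * k ≤ n + 2 := by
    have h := Nat.ceil_lt_add_one (show (0:ℚ) ≤ (n : ℚ) / 3 by positivity)
    rw [← hk] at h
    have h' : (3 * k : ℚ) < (n : ℚ) + 3 := by linarith
    have h'' : 3 * k < n + 3 := by exact_mod_cast h'
    omega
  have hkp : 1 ≤ k := by omega
  unfold treeLength
  apply le_antisymm
  · exact Nat.sInf_le (CycleTL.upper n k hn hk1 hk2 hkp)
  · apply le_csInf ⟨k, by exact CycleTL.upper n k hn hk1 hk2 hkp⟩
    intro b hb
    exact CycleTL.lower k b hn hk1 hk2 hkp (by exact hb)
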